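/- Let F : A → E be a fully faithful dense functor where E has pullbacks, and let F* : E → Set^(A^op) be the induced singular functor. Then F* preserves exponentials: for every exponentiable morphism f : B → A in E and every object C over B, F*(Π_f C) ≅ Π_{F*f}(F* C). -/

import Mathlib

open CategoryTheory Limits

set_option maxHeartbeats 1000000

universe v u₁ u₂

variable {A : Type u₁} [Category.{v} A] {E : Type u₂} [Category.{v} E]

/-- The canonical cocone over `F/X → A → E` with cocone point `X`. -/
@[simps]
def canonicalCocone (F : A ⥤ E) (X : E) : Cocone (CostructuredArrow.proj F X ⋙ F) where
  pt := X
  ι :=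
    { app := fun Y => Y.hom
      naturality := by
        intro Y Z m
        simp [CostructuredArrow.w m]
        exact (CostructuredArrow.w m).trans (Category.comp_id _).symm }

/-- A functor `F : A ⥤ E` is dense if for every object `X` of `E` the canonical cocone
`colim (F/X → A → E) → X` is a colimit. -/
def IsDenseFunctor (F : A ⥤ E) : Prop :=
  ∀ X : E, Nonempty (IsColimit (canonicalCocone F X))

/-- The singular functor `F* : E ⥤ Set^(Aᵒᵖ)` induced by `F : A ⥤ E`. -/
def singularFunctor (F : A ⥤ E) : E ⥤ (Aᵒᵖ ⥤ Type v) :=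
  yoneda ⋙ (Functor.whiskeringLeft Aᵒᵖ Eᵒᵖ (Type v)).obj F.op

namespace DenseExpAux

open Opposite OverPresheafAux

/-- The cocone used to produce preimages under the singular functor. -/
@[simps]
def transfCocone (F : A ⥤ E) {X Y : E}
    (α : (singularFunctor F).obj X ⟶ (singularFunctor F).obj Y) :
    Cocone (CostructuredArrow.proj F X ⋙ F) where
  pt := Y
  ι :=
    { app := fun c => α.app (op c.left) c.hom
      naturality := fun c c' m => by
        have h : α.app (op c.left) (F.map m.left ≫ c'.hom)
            = F.map m.left ≫ α.app (op c'.left) c'.hom :=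
          types_congr_hom (α.naturality m.left.op) c'.hom
        have hw : F.map m.left ≫ c'.hom = c.hom := CostructuredArrow.w m
        show F.map m.left ≫ α.app (op c'.left) c'.hom = α.app (op c.left) c.hom ≫ 𝟙 Y
        exact h.symm.trans ((congrArg (fun x => α.app (op c.left) x) hw).trans
          (Category.comp_id _).symm) }

/-- A dense functor has a fully faithful singular functor. -/
noncomputable def denseFullyFaithful (F : A ⥤ E) (hF : IsDenseFunctor F) :
    (singularFunctor F).FullyFaithful where
  preimage {X Y} α := (Classical.choice (hF X)).desc (transfCocone F α)
  map_preimage {X Y} α := by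
    ext a u
    exact (Classical.choice (hF X)).fac (transfCocone F α) (CostructuredArrow.mk u)
  preimage_map {X Y} t :=
    ((Classical.choice (hF X)).uniq (transfCocone F ((singularFunctor F).map t)) t
      (fun c => rfl)).symm

/-- The canonical isomorphism `yoneda.obj a ≅ F*(F a)` for a fully faithful `F`. -/
noncomputable def yonGIso (F : A ⥤ E) [F.Full] [F.Faithful] (a : A) :
    yoneda.obj a ≅ (singularFunctor F).obj (F.obj a) :=
  NatIso.ofComponents
    (fun b => Equiv.toIso ((Functor.FullyFaithful.ofFullyFaithful F).homEquiv))
    (fun h => by ext t; exact F.map_comp _ _)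

/-- A pullback-preserving functor commutes with `Over.pullback` up to iso. -/
noncomputable def postPullbackNatIso {C₁ : Type*} {C₂ : Type*} [Category C₁] [Category C₂]
    [HasPullbacks C₁] [HasPullbacks C₂] (G : C₁ ⥤ C₂)
    [PreservesLimitsOfShape WalkingCospan G] {B A' : C₁} (f : B ⟶ A') :
    Over.post G ⋙ Over.pullback (G.map f) ≅ Over.pullback f ⋙ Over.post G :=
  NatIso.ofComponents
    (fun X => Over.isoMk (PreservesPullback.iso G X.hom f).symm (by simp [Over.post, Over.pullback]))
    (fun {X X'} k => by
      ext
      show pullback.lift _ _ _ ≫ (PreservesPullback.iso G X'.hom f).inv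
        = (PreservesPullback.iso G X.hom f).inv ≫ G.map (pullback.lift _ _ _)
      rw [Iso.comp_inv_eq, Category.assoc, PreservesPullback.iso_hom,
        map_lift_pullbackComparison]
      apply pullback.hom_ext
      · erw [pullback.lift_fst]; simp [Over.post]; erw [pullback.lift_fst]; simp
      · erw [pullback.lift_snd]; simp [Over.post]; erw [pullback.lift_snd]; simp)

/-- `OverArrows` is the hom-set in the over category out of a representable. -/
def overArrowsHomEquiv {P : Aᵒᵖ ⥤ Type v} (Y : Over P) {a : A} (t : yoneda.obj a ⟶ P) :
    OverArrows Y.hom t ≃ (Over.mk t ⟶ Y) where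
  toFun u := Over.homMk (yonedaEquiv.symm u.val) (by
    apply yonedaEquiv.injective
    rw [yonedaEquiv_comp, Equiv.apply_symm_apply]
    exact u.app_val)
  invFun r := ⟨yonedaEquiv r.left, ⟨by
    rw [← yonedaEquiv_comp]
    exact congrArg yonedaEquiv (Over.w r)⟩⟩
  left_inv u := OverArrows.ext (by simp)
  right_inv r := by
    apply Over.OverMorphism.ext
    simp

lemma overArrowsHomEquiv_map₂ {P : Aᵒᵖ ⥤ Type v} (Y : Over P) {a a' : A} (h : a' ⟶ a)
    {σ : yoneda.obj a ⟶ P} {σ' : yoneda.obj a' ⟶ P} (hw : yoneda.map h ≫ σ = σ')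
    (u : OverArrows Y.hom σ) :
    overArrowsHomEquiv Y σ' (u.map₂ h hw)
      = Over.homMk (yoneda.map h) hw ≫ overArrowsHomEquiv Y σ u := by
  apply Over.OverMorphism.ext
  show yonedaEquiv.symm (Y.left.map h.op u.val) = yoneda.map h ≫ yonedaEquiv.symm u.val
  rw [Equiv.symm_apply_eq, ← yonedaEquiv_naturality]
  simp

lemma overArrowsHomEquiv_symm_map₂ {P : Aᵒᵖ ⥤ Type v} (Y : Over P) {a a' : A} (h : a' ⟶ a)
    {σ : yoneda.obj a ⟶ P} {σ' : yoneda.obj a' ⟶ P} (hw : yoneda.map h ≫ σ = σ')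
    (R : Over.mk σ ⟶ Y) :
    (overArrowsHomEquiv Y σ').symm ((Over.homMk (yoneda.map h) hw : Over.mk σ' ⟶ Over.mk σ) ≫ R)
      = ((overArrowsHomEquiv Y σ).symm R).map₂ h hw := by
  apply OverArrows.ext
  show yonedaEquiv (((Over.homMk (yoneda.map h) hw : Over.mk σ' ⟶ Over.mk σ) ≫ R).left)
    = Y.left.map h.op (yonedaEquiv R.left)
  rw [yonedaEquiv_naturality]
  rfl

section Main

variable [HasPullbacks E] (F : A ⥤ E) [F.Full] [F.Faithful]

instance singularFunctorPreservesPullbacks :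
    PreservesLimitsOfShape WalkingCospan (singularFunctor F) :=
  inferInstanceAs (PreservesLimitsOfShape WalkingCospan
    (yoneda ⋙ (Functor.whiskeringLeft Aᵒᵖ Eᵒᵖ (Type v)).obj F.op))

variable {B A' : E} (f : B ⟶ A')
variable (Pf : Over B ⥤ Over A') (adj : Over.pullback f ⊣ Pf)
variable (Pg : Over ((singularFunctor F).obj B) ⥤ Over ((singularFunctor F).obj A'))
variable (adj' : Over.pullback ((singularFunctor F).map f) ⊣ Pg)
variable (C : Over B)
variable (ffG : (singularFunctor F).FullyFaithful)

/-- The isomorphism `Over.mk σ ≅ F*(yonedaEquiv σ)` over `F* A'`. -/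
noncomputable def chiIso {a : A} (σ : yoneda.obj a ⟶ (singularFunctor F).obj A') :
    Over.mk σ ≅ (Over.post (singularFunctor F)).obj (Over.mk (yonedaEquiv σ)) :=
  Over.isoMk (yonGIso F a) (by
    ext b t
    have h1 : ((singularFunctor F).obj A').map t.op (yonedaEquiv σ)
        = yonedaEquiv (yoneda.map t ≫ σ) := yonedaEquiv_naturality σ t
    have h2 : yonedaEquiv (yoneda.map t ≫ σ) = σ.app b t := by
      rw [yonedaEquiv_comp, yonedaEquiv_yoneda_map]
    exact h1.trans h2)

/-- A fully faithful structure on `Over.post (singularFunctor F) : Over B ⥤ _`. -/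
noncomputable def ffPostB : (Over.post (X := B) (singularFunctor F)).FullyFaithful := by
  letI := ffG.full
  letI := ffG.faithful
  exact Functor.FullyFaithful.ofFullyFaithful _

/-- A fully faithful structure on `Over.post (singularFunctor F) : Over A' ⥤ _`. -/
noncomputable def ffPostA' : (Over.post (X := A') (singularFunctor F)).FullyFaithful := by
  letI := ffG.full
  letI := ffG.faithful
  exact Functor.FullyFaithful.ofFullyFaithful _

/-- The comparison isomorphism for pullbacks along `F* f`. -/
noncomputable def epsIso {a : A} (σ : yoneda.obj a ⟶ (singularFunctor F).obj A') :
    (Over.pullback ((singularFunctor F).map f)).obj (Over.mk σ) ≅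
      (Over.post (singularFunctor F)).obj ((Over.pullback f).obj (Over.mk (yonedaEquiv σ))) :=
  (Over.pullback ((singularFunctor F).map f)).mapIso (chiIso F σ) ≪≫
    (postPullbackNatIso (singularFunctor F) f).app (Over.mk (yonedaEquiv σ))

/-- The chain of hom-set equivalences underlying the main theorem. -/
noncomputable def homChain {a : A} (σ : yoneda.obj a ⟶ (singularFunctor F).obj A') :
    (Over.mk σ ⟶ (Over.post (singularFunctor F)).obj (Pf.obj C)) ≃
      (Over.mk σ ⟶ Pg.obj ((Over.post (singularFunctor F)).obj C)) :=
  (Iso.homCongr (chiIso F σ) (Iso.refl _)).trans <|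
    ((ffPostA' F ffG).homEquiv.symm).trans <|
      ((adj.homEquiv _ C).symm).trans <|
        ((ffPostB F ffG).homEquiv).trans <|
          (Iso.homCongr (epsIso F f σ).symm (Iso.refl _)).trans <|
            (adj'.homEquiv _ _)

section Naturality

variable {a a' : A} (h : a' ⟶ a)
  {σ : yoneda.obj a ⟶ (singularFunctor F).obj A'}
  {σ' : yoneda.obj a' ⟶ (singularFunctor F).obj A'}

lemma gEq (hw : yoneda.map h ≫ σ = σ') : F.map h ≫ yonedaEquiv σ = yonedaEquiv σ' := by
  rw [← hw]
  exact yonedaEquiv_naturality σ h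

lemma chi_natural (hw : yoneda.map h ≫ σ = σ') :
    (Over.homMk (yoneda.map h) hw : Over.mk σ' ⟶ Over.mk σ) ≫ (chiIso F σ).hom
      = (chiIso F σ').hom ≫ (Over.post (singularFunctor F)).map
          (Over.homMk (F.map h) (gEq F h hw) :
            Over.mk (yonedaEquiv σ') ⟶ Over.mk (yonedaEquiv σ)) := by
  apply Over.OverMorphism.ext
  ext b t
  exact F.map_comp t h

lemma chi_natural_inv (hw : yoneda.map h ≫ σ = σ') :
    (chiIso F σ').inv ≫ (Over.homMk (yoneda.map h) hw : Over.mk σ' ⟶ Over.mk σ)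
      = (Over.post (singularFunctor F)).map
          (Over.homMk (F.map h) (gEq F h hw) :
            Over.mk (yonedaEquiv σ') ⟶ Over.mk (yonedaEquiv σ))
          ≫ (chiIso F σ).inv := by
  rw [Iso.inv_comp_eq, ← Category.assoc, ← chi_natural F h hw, Category.assoc,
    Iso.hom_inv_id, Category.comp_id]

lemma eps_natural (hw : yoneda.map h ≫ σ = σ') :
    (Over.pullback ((singularFunctor F).map f)).map
        (Over.homMk (yoneda.map h) hw : Over.mk σ' ⟶ Over.mk σ) ≫ (epsIso F f σ).hom
      = (epsIso F f σ').hom ≫ (Over.post (singularFunctor F)).map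
          ((Over.pullback f).map
            (Over.homMk (F.map h) (gEq F h hw) :
              Over.mk (yonedaEquiv σ') ⟶ Over.mk (yonedaEquiv σ))) := by
  dsimp only [epsIso, Iso.trans_hom, Functor.mapIso_hom]
  rw [← Category.assoc, ← Functor.map_comp, chi_natural F h hw, Functor.map_comp,
    Category.assoc, Category.assoc]
  congr 1
  exact (postPullbackNatIso (singularFunctor F) f).hom.naturality
    (Over.homMk (F.map h) (gEq F h hw) :
      Over.mk (yonedaEquiv σ') ⟶ Over.mk (yonedaEquiv σ))

lemma homChain_natural (hw : yoneda.map h ≫ σ = σ')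
    (r : Over.mk σ ⟶ (Over.post (singularFunctor F)).obj (Pf.obj C)) :
    homChain F f Pf adj Pg adj' C ffG σ'
        ((Over.homMk (yoneda.map h) hw : Over.mk σ' ⟶ Over.mk σ) ≫ r)
      = (Over.homMk (yoneda.map h) hw : Over.mk σ' ⟶ Over.mk σ)
          ≫ homChain F f Pf adj Pg adj' C ffG σ r := by
  set k₀ : Over.mk (yonedaEquiv σ') ⟶ Over.mk (yonedaEquiv σ) :=
    Over.homMk (F.map h) (gEq F h hw) with hk₀
  simp only [homChain, Equiv.trans_apply, Iso.homCongr_apply, Iso.refl_hom, Iso.symm_inv,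
    Category.comp_id, Iso.symm_hom]
  -- step 1 : χ-naturality
  rw [← Category.assoc, chi_natural_inv F h hw, Category.assoc]
  -- step 2 : fully faithfulness of `Over.post`
  have e2 : (ffPostA' F ffG).homEquiv.symm
      ((Over.post (singularFunctor F)).map k₀ ≫ ((chiIso F σ).inv ≫ r))
      = k₀ ≫ (ffPostA' F ffG).homEquiv.symm ((chiIso F σ).inv ≫ r) := by
    apply (ffPostA' F ffG).homEquiv.injective
    rw [Equiv.apply_symm_apply, Functor.FullyFaithful.homEquiv_apply, Functor.map_comp,
      Functor.FullyFaithful.homEquiv_symm_apply, Functor.FullyFaithful.map_preimage]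
  rw [e2]
  -- step 3 : naturality of `adj.homEquiv`
  rw [Adjunction.homEquiv_naturality_left_symm]
  -- step 4 : `Over.post` is a functor
  rw [Functor.FullyFaithful.homEquiv_apply, Functor.FullyFaithful.homEquiv_apply,
    Functor.map_comp]
  -- step 5 : ε-naturality
  rw [← Category.assoc, ← eps_natural F f h hw, Category.assoc]
  -- step 6 : naturality of `adj'.homEquiv`
  rw [Adjunction.homEquiv_naturality_left]

end Naturality

/-- The big equivalence between the two sets of sections. -/
noncomputable def bigEquiv {a : A} (σ : yoneda.obj a ⟶ (singularFunctor F).obj A') :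
    OverArrows ((Over.post (singularFunctor F)).obj (Pf.obj C)).hom σ ≃
      OverArrows (Pg.obj ((Over.post (singularFunctor F)).obj C)).hom σ :=
  (overArrowsHomEquiv _ σ).trans ((homChain F f Pf adj Pg adj' C ffG σ).trans
    (overArrowsHomEquiv _ σ).symm)

lemma bigEquiv_natural {a a' : A} (h : a' ⟶ a)
    {σ : yoneda.obj a ⟶ (singularFunctor F).obj A'}
    {σ' : yoneda.obj a' ⟶ (singularFunctor F).obj A'}
    (hw : yoneda.map h ≫ σ = σ')
    (u : OverArrows ((Over.post (singularFunctor F)).obj (Pf.obj C)).hom σ) :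
    bigEquiv F f Pf adj Pg adj' C ffG σ' (u.map₂ h hw)
      = (bigEquiv F f Pf adj Pg adj' C ffG σ u).map₂ h hw := by
  dsimp only [bigEquiv, Equiv.trans_apply]
  rw [overArrowsHomEquiv_map₂, homChain_natural, overArrowsHomEquiv_symm_map₂]

end Main

end DenseExpAux

open DenseExpAux OverPresheafAux in
/-- For a fully faithful dense functor `F : A ⥤ E` into a category with pullbacks, the
singular functor `F*` preserves exponentials: for any exponentiable `f : B ⟶ A'` in `E`
(witnessed by a right adjoint `Pf ⊢ Δ_f`) and any right adjoint `Pg` of pullback along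
`F* f` in presheaves, one has `F*(Π_f C) ≅ Π_{F* f}(F* C)` over `F* A'`. -/
theorem singularFunctor_preserves_exponentials [HasPullbacks E]
    (F : A ⥤ E) [F.Full] [F.Faithful] (hF : IsDenseFunctor F)
    {B A' : E} (f : B ⟶ A')
    (Pf : Over B ⥤ Over A') (adj : Over.pullback f ⊣ Pf)
    (Pg : Over ((singularFunctor F).obj B) ⥤ Over ((singularFunctor F).obj A'))
    (adj' : Over.pullback ((singularFunctor F).map f) ⊣ Pg)
    (C : Over B) :
    Nonempty ((Over.post (singularFunctor F)).obj (Pf.obj C) ≅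
      Pg.obj ((Over.post (singularFunctor F)).obj C)) := by
  let ffG := denseFullyFaithful F hF
  let e := overEquivPresheafCostructuredArrow ((singularFunctor F).obj A')
  refine ⟨e.fullyFaithfulFunctor.preimageIso ?_⟩
  exact NatIso.ofComponents
    (fun s => Equiv.toIso (bigEquiv F f Pf adj Pg adj' C ffG s.unop.hom))
    (fun {s s'} φ => by
      ext u
      exact bigEquiv_natural F f Pf adj Pg adj' C ffG φ.unop.left φ.unop.w u)
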